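/- Let n ≥ 1, let M, K ∈ ℝ^{n×n} be skew-symmetric matrices, let S : ℝⁿ → ℝ be continuously differentiable, and let z : ℝ² → ℝⁿ be twice continuously differentiable (arguments written z(x,t)) and satisfy M ∂ₜz(x,t) + K ∂ₓz(x,t) = ∇S(z(x,t)) for all (x,t) ∈ ℝ². Define the energy density E(x,t) = S(z(x,t)) − ½⟨z(x,t), K ∂ₓz(x,t)⟩ and the energy flux F(x,t) = ½⟨z(x,t), K ∂ₜz(x,t)⟩. Then the energy conservation law ∂ₜE(x,t) + ∂ₓF(x,t) = 0 holds for all (x,t) ∈ ℝ². -/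

import Mathlib

open scoped RealInnerProductSpace
open Matrix

noncomputable def matCLM {n : ℕ} (A : Matrix (Fin n) (Fin n) ℝ) :
    EuclideanSpace ℝ (Fin n) →L[ℝ] EuclideanSpace ℝ (Fin n) :=
  LinearMap.toContinuousLinearMap
    { toFun := fun v => WithLp.toLp 2 (A.mulVec (WithLp.ofLp v))
      map_add' := fun u v => by simp [Matrix.mulVec_add]
      map_smul' := fun c v => by simp [Matrix.mulVec_smul] }

@[simp] lemma matCLM_apply {n : ℕ} (A : Matrix (Fin n) (Fin n) ℝ)
    (v : EuclideanSpace ℝ (Fin n)) :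
    matCLM A v = WithLp.toLp 2 (A.mulVec (WithLp.ofLp v)) := rfl

lemma inner_eq_dot {n : ℕ} (a b : EuclideanSpace ℝ (Fin n)) :
    ⟪a, b⟫ = (a : Fin n → ℝ) ⬝ᵥ (b : Fin n → ℝ) := by
  simp [PiLp.inner_apply, dotProduct, mul_comm]

lemma skew_inner {n : ℕ} (A : Matrix (Fin n) (Fin n) ℝ) (hA : Aᵀ = -A)
    (u v : EuclideanSpace ℝ (Fin n)) :
    ⟪u, (WithLp.toLp 2 (A.mulVec (WithLp.ofLp v)) : EuclideanSpace ℝ (Fin n))⟫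
      = -⟪v, (WithLp.toLp 2 (A.mulVec (WithLp.ofLp u)) : EuclideanSpace ℝ (Fin n))⟫ := by
  rw [inner_eq_dot, inner_eq_dot, WithLp.ofLp_toLp, WithLp.ofLp_toLp, Matrix.dotProduct_mulVec]
  rw [show (u : Fin n → ℝ) ᵥ* A = Aᵀ *ᵥ (u : Fin n → ℝ) by
    rw [← Matrix.transpose_transpose A, Matrix.vecMul_transpose, Matrix.transpose_transpose]]
  rw [hA, Matrix.neg_mulVec, neg_dotProduct, dotProduct_comm]

theorem stmt0 (n : ℕ) (hn : 1 ≤ n)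
    (M K : Matrix (Fin n) (Fin n) ℝ)
    (hM : Mᵀ = -M) (hK : Kᵀ = -K)
    (S : EuclideanSpace ℝ (Fin n) → ℝ) (hS : ContDiff ℝ 1 S)
    (z : ℝ → ℝ → EuclideanSpace ℝ (Fin n))
    (hz : ContDiff ℝ 2 (Function.uncurry z))
    (hpde : ∀ x t : ℝ,
      (WithLp.toLp 2 (M.mulVec (WithLp.ofLp (deriv (fun s => z x s) t))) : EuclideanSpace ℝ (Fin n))
        + (WithLp.toLp 2 (K.mulVec (WithLp.ofLp (deriv (fun y => z y t) x))) : EuclideanSpace ℝ (Fin n))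
        = gradient S (z x t))
    (E F : ℝ → ℝ → ℝ)
    (hE : ∀ x t : ℝ, E x t = S (z x t)
      - (1 / 2) * ⟪z x t, (WithLp.toLp 2 (K.mulVec (WithLp.ofLp (deriv (fun y => z y t) x))) : EuclideanSpace ℝ (Fin n))⟫)
    (hF : ∀ x t : ℝ, F x t =
      (1 / 2) * ⟪z x t, (WithLp.toLp 2 (K.mulVec (WithLp.ofLp (deriv (fun s => z x s) t))) : EuclideanSpace ℝ (Fin n))⟫) :
    ∀ x t : ℝ, deriv (fun s => E x s) t + deriv (fun y => F y t) x = 0 := by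
  intro x t
  have hfd : Differentiable ℝ (Function.uncurry z) := hz.differentiable (by norm_num)
  set f' : ℝ × ℝ → (ℝ × ℝ →L[ℝ] EuclideanSpace ℝ (Fin n)) :=
    fderiv ℝ (Function.uncurry z) with hf'
  have hf'c : ContDiff ℝ 1 f' := hz.fderiv_right (by norm_num)
  have hf'd : Differentiable ℝ f' := hf'c.differentiable one_ne_zero
  -- curves
  have hcT : ∀ a b : ℝ, HasDerivAt (fun s => ((a, s) : ℝ × ℝ)) (0, 1) b :=
    fun a b => (hasDerivAt_const b a).prodMk (hasDerivAt_id b)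
  have hcX : ∀ a b : ℝ, HasDerivAt (fun y => ((y, b) : ℝ × ℝ)) (1, 0) a :=
    fun a b => (hasDerivAt_id a).prodMk (hasDerivAt_const a b)
  -- partial derivatives of z
  have hzT : ∀ a b : ℝ, HasDerivAt (fun s => z a s) (f' (a, b) (0, 1)) b := fun a b =>
    (hfd (a, b)).hasFDerivAt.comp_hasDerivAt b (hcT a b)
  have hzX : ∀ a b : ℝ, HasDerivAt (fun y => z y b) (f' (a, b) (1, 0)) a := fun a b =>
    by have := (hfd (a, b)).hasFDerivAt.comp_hasDerivAt a (hcX a b); exact this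
  have dT : ∀ a b : ℝ, deriv (fun s => z a s) b = f' (a, b) (0, 1) := fun a b => (hzT a b).deriv
  have dX : ∀ a b : ℝ, deriv (fun y => z y b) a = f' (a, b) (1, 0) := fun a b => (hzX a b).deriv
  -- second derivative and its symmetry
  have hf'' : HasFDerivAt f' (fderiv ℝ f' (x, t)) (x, t) := (hf'd (x, t)).hasFDerivAt
  have hsymm : ∀ v w : ℝ × ℝ, fderiv ℝ f' (x, t) v w = fderiv ℝ f' (x, t) w v :=
    second_derivative_symmetric (fun y => (hfd y).hasFDerivAt) hf''
  set W : EuclideanSpace ℝ (Fin n) := fderiv ℝ f' (x, t) (0, 1) (1, 0) with hW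
  -- mixed partials
  have hmix1 : HasDerivAt (fun s => f' (x, s) (1, 0)) W t := by
    have h1 : HasDerivAt (fun s => f' (x, s)) (fderiv ℝ f' (x, t) (0, 1)) t :=
      hf''.comp_hasDerivAt t (hcT x t)
    simpa using h1.clm_apply (hasDerivAt_const t ((1, 0) : ℝ × ℝ))
  have hmix2 : HasDerivAt (fun y => f' (y, t) (0, 1)) W x := by
    have h1 : HasDerivAt (fun y => f' (y, t)) (fderiv ℝ f' (x, t) (1, 0)) x :=
      hf''.comp_hasDerivAt x (hcX x t)
    have := h1.clm_apply (hasDerivAt_const x ((0, 1) : ℝ × ℝ))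
    simpa [hsymm (1, 0) (0, 1), ← hW] using this
  -- derivative of S along t
  have hSt : HasDerivAt (fun s => S (z x s)) ⟪gradient S (z x t), f' (x, t) (0, 1)⟫ t := by
    have hg : HasGradientAt S (gradient S (z x t)) (z x t) :=
      (hS.differentiable one_ne_zero (z x t)).hasGradientAt
    have := hg.hasFDerivAt.comp_hasDerivAt t (hzT x t)
    rw [InnerProductSpace.toDual_apply_apply] at this
    exact this
  -- derivative of the E-inner term along t
  have hI1 : HasDerivAt
      (fun s => ⟪z x s, (WithLp.toLp 2 (K.mulVec (WithLp.ofLp (f' (x, s) (1, 0)))) : EuclideanSpace ℝ (Fin n))⟫)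
      (⟪z x t, (WithLp.toLp 2 (K.mulVec (WithLp.ofLp W)) : EuclideanSpace ℝ (Fin n))⟫
        + ⟪f' (x, t) (0, 1), (WithLp.toLp 2 (K.mulVec (WithLp.ofLp (f' (x, t) (1, 0)))) : EuclideanSpace ℝ (Fin n))⟫) t := by
    have hK1 : HasDerivAt (fun s => matCLM K (f' (x, s) (1, 0))) (matCLM K W) t :=
      (matCLM K).hasFDerivAt.comp_hasDerivAt t hmix1
    simpa using HasDerivAt.inner ℝ (hzT x t) hK1
  -- derivative of the F-inner term along x
  have hI2 : HasDerivAt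
      (fun y => ⟪z y t, (WithLp.toLp 2 (K.mulVec (WithLp.ofLp (f' (y, t) (0, 1)))) : EuclideanSpace ℝ (Fin n))⟫)
      (⟪z x t, (WithLp.toLp 2 (K.mulVec (WithLp.ofLp W)) : EuclideanSpace ℝ (Fin n))⟫
        + ⟪f' (x, t) (1, 0), (WithLp.toLp 2 (K.mulVec (WithLp.ofLp (f' (x, t) (0, 1)))) : EuclideanSpace ℝ (Fin n))⟫) x := by
    have hK2 : HasDerivAt (fun y => matCLM K (f' (y, t) (0, 1))) (matCLM K W) x :=
      (matCLM K).hasFDerivAt.comp_hasDerivAt x hmix2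
    simpa using HasDerivAt.inner ℝ (hzX x t) hK2
  -- compute deriv E
  have hEfun : (fun s => E x s) = fun s => S (z x s)
      - (1 / 2) * ⟪z x s, (WithLp.toLp 2 (K.mulVec (WithLp.ofLp (f' (x, s) (1, 0)))) : EuclideanSpace ℝ (Fin n))⟫ :=
    funext fun s => by rw [hE x s, dX x s]
  have hFfun : (fun y => F y t) = fun y =>
      (1 / 2) * ⟪z y t, (WithLp.toLp 2 (K.mulVec (WithLp.ofLp (f' (y, t) (0, 1)))) : EuclideanSpace ℝ (Fin n))⟫ :=
    funext fun y => by rw [hF y t, dT y t]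
  have hdE : deriv (fun s => E x s) t = ⟪gradient S (z x t), f' (x, t) (0, 1)⟫
      - (1 / 2) * (⟪z x t, (WithLp.toLp 2 (K.mulVec (WithLp.ofLp W)) : EuclideanSpace ℝ (Fin n))⟫
        + ⟪f' (x, t) (0, 1), (WithLp.toLp 2 (K.mulVec (WithLp.ofLp (f' (x, t) (1, 0)))) : EuclideanSpace ℝ (Fin n))⟫) := by
    rw [hEfun]
    exact (hSt.sub (hI1.const_mul (1 / 2))).deriv
  have hdF : deriv (fun y => F y t) x =
      (1 / 2) * (⟪z x t, (WithLp.toLp 2 (K.mulVec (WithLp.ofLp W)) : EuclideanSpace ℝ (Fin n))⟫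
        + ⟪f' (x, t) (1, 0), (WithLp.toLp 2 (K.mulVec (WithLp.ofLp (f' (x, t) (0, 1)))) : EuclideanSpace ℝ (Fin n))⟫) := by
    rw [hFfun]
    exact (hI2.const_mul (1 / 2)).deriv
  -- the PDE at (x, t)
  have hp := hpde x t
  rw [dT x t, dX x t] at hp
  set zt := f' (x, t) (0, 1) with hzt
  set zx := f' (x, t) (1, 0) with hzx
  have h2 : @inner ℝ (EuclideanSpace ℝ (Fin n)) _
      (WithLp.toLp 2 (M.mulVec (WithLp.ofLp zt)) : EuclideanSpace ℝ (Fin n)) zt = 0 := by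
    have h := skew_inner M hM zt zt
    have h' := real_inner_comm zt (WithLp.toLp 2 (M.mulVec (WithLp.ofLp zt)) : EuclideanSpace ℝ (Fin n))
    linear_combination h' + (1 / 2) * h
  have hG : ⟪gradient S (z x t), zt⟫
      = ⟪zt, (WithLp.toLp 2 (K.mulVec (WithLp.ofLp zx)) : EuclideanSpace ℝ (Fin n))⟫ := by
    have hadd : @inner ℝ (EuclideanSpace ℝ (Fin n)) _
        ((WithLp.toLp 2 (M.mulVec (WithLp.ofLp zt)) : EuclideanSpace ℝ (Fin n))
          + (WithLp.toLp 2 (K.mulVec (WithLp.ofLp zx)) : EuclideanSpace ℝ (Fin n))) zt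
        = @inner ℝ (EuclideanSpace ℝ (Fin n)) _
            (WithLp.toLp 2 (M.mulVec (WithLp.ofLp zt)) : EuclideanSpace ℝ (Fin n)) zt
          + @inner ℝ (EuclideanSpace ℝ (Fin n)) _
            (WithLp.toLp 2 (K.mulVec (WithLp.ofLp zx)) : EuclideanSpace ℝ (Fin n)) zt := inner_add_left _ _ _
    rw [← hp, hadd, h2, zero_add, real_inner_comm]
  have h3 : @inner ℝ (EuclideanSpace ℝ (Fin n)) _ zx
        (WithLp.toLp 2 (K.mulVec (WithLp.ofLp zt)) : EuclideanSpace ℝ (Fin n))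
      = -(@inner ℝ (EuclideanSpace ℝ (Fin n)) _ zt
        (WithLp.toLp 2 (K.mulVec (WithLp.ofLp zx)) : EuclideanSpace ℝ (Fin n))) := skew_inner K hK zx zt
  rw [hdE, hdF, hG]
  linarith [h3]
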